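/- Let (X⁺, T) be a transitive locally compact one-sided countable Markov shift with potential φ of summable variations, and λ > 0. If the Green's function G(f, x | λ) = Σ_{n≥0} λ⁻ⁿ (L_φⁿ f)(x) is finite for one non-zero f ∈ C_c⁺(X⁺) and one x ∈ X⁺, then it is finite for every f ∈ C_c⁺(X⁺) and every x ∈ X⁺. In particular, λ-transience does not depend on the choice of f and x. -/

import Mathlib

open MeasureTheory ENNReal Filter Topology

variable {S : Type*}

/-- The one-sided topological Markov shift over alphabet `S` with transition relation `Adj`. -/
abbrev MShift (Adj : S → S → Prop) : Type _ :=
  {x : ℕ → S // ∀ i, Adj (x i) (x (i + 1))}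

/-- The left shift map. -/
def shiftMap (Adj : S → S → Prop) (x : MShift Adj) : MShift Adj :=
  ⟨fun i => x.1 (i + 1), fun i => x.2 (i + 1)⟩

/-- The Ruelle (transfer) operator on non-negative functions. -/
noncomputable def Ruelle (Adj : S → S → Prop) (φ : MShift Adj → ℝ)
    (f : MShift Adj → ℝ≥0∞) (x : MShift Adj) : ℝ≥0∞ :=
  ∑' y : {y : MShift Adj // shiftMap Adj y = x}, ENNReal.ofReal (Real.exp (φ y.1)) * f y.1

/-- The Green's function `G(f, x | λ) = Σ_n λ⁻ⁿ (L_φⁿ f)(x)`. -/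
noncomputable def Green (Adj : S → S → Prop) (φ : MShift Adj → ℝ) (lam : ℝ)
    (f : MShift Adj → ℝ≥0∞) (x : MShift Adj) : ℝ≥0∞ :=
  ∑' n : ℕ, ENNReal.ofReal ((lam ^ n)⁻¹) * ((Ruelle Adj φ)^[n] f) x

/-- The cylinder set `[a] = {x : x₀ = a}`. -/
def cylA (Adj : S → S → Prop) (a : S) : Set (MShift Adj) := {x | x.1 0 = a}

/-- Indicator function of the cylinder `[a]`. -/
noncomputable def cylInd (Adj : S → S → Prop) (a : S) : MShift Adj → ℝ≥0∞ :=
  (cylA Adj a).indicator 1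

/-- Topological transitivity: every state can be reached from every state. -/
def TransitiveShift (Adj : S → S → Prop) : Prop :=
  ∀ a b : S, ∃ (n : ℕ) (x : MShift Adj), x.1 0 = a ∧ ((shiftMap Adj)^[n] x).1 0 = b

/-- Local compactness: each state has finitely many followers. -/
def LocFin (Adj : S → S → Prop) : Prop := ∀ a : S, {b : S | Adj a b}.Finite

/-- Set of values `|φ(x) − φ(y)|` over pairs agreeing in their first `m` coordinates. -/
def varSet (Adj : S → S → Prop) (φ : MShift Adj → ℝ) (m : ℕ) : Set ℝ :=
  {r | ∃ x y : MShift Adj, (∀ i < m, x.1 i = y.1 i) ∧ r = |φ x - φ y|}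

/-- The `m`-th variation of `φ`. -/
noncomputable def Var (Adj : S → S → Prop) (φ : MShift Adj → ℝ) (m : ℕ) : ℝ :=
  sSup (varSet Adj φ m)

/-- `φ` has summable variations. -/
def SummableVar (Adj : S → S → Prop) (φ : MShift Adj → ℝ) : Prop :=
  (∀ m, BddAbove (varSet Adj φ m)) ∧ Summable (Var Adj φ)

/-- A non-negative real function viewed as `ℝ≥0∞`-valued. -/
noncomputable def ofR {Adj : S → S → Prop} (f : MShift Adj → ℝ) : MShift Adj → ℝ≥0∞ :=
  fun x => ENNReal.ofReal (f x)

/-- `λ`-transience: the Green's function of every cylinder is finite everywhere. -/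
def Transient (Adj : S → S → Prop) (φ : MShift Adj → ℝ) (lam : ℝ) : Prop :=
  ∀ (a : S) (x : MShift Adj), Green Adj φ lam (cylInd Adj a) x ≠ ⊤

namespace GFE

variable {Adj : S → S → Prop} {φ : MShift Adj → ℝ}

lemma shift_iterate_apply (k : ℕ) (x : MShift Adj) (i : ℕ) :
    ((shiftMap Adj)^[k] x).1 i = x.1 (i + k) := by
  induction k generalizing x with
  | zero => rfl
  | succ k ih =>
    rw [Function.iterate_succ_apply, ih]
    rfl

noncomputable def birk (Adj : S → S → Prop) (φ : MShift Adj → ℝ) : ℕ → MShift Adj → ℝ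
  | 0, _ => 0
  | n+1, y => φ y + birk Adj φ n (shiftMap Adj y)

lemma birk_add (k n : ℕ) (y : MShift Adj) :
    birk Adj φ (k + n) y = birk Adj φ k y + birk Adj φ n ((shiftMap Adj)^[k] y) := by
  induction k generalizing y with
  | zero => simp [birk]
  | succ k ih =>
    have h : k + 1 + n = (k + n) + 1 := by omega
    rw [h]
    show φ y + birk Adj φ (k + n) (shiftMap Adj y) = _
    rw [ih, Function.iterate_succ_apply]
    show _ = φ y + birk Adj φ k (shiftMap Adj y) + _
    ring

lemma birk_eq_sum (n : ℕ) (y : MShift Adj) :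
    birk Adj φ n y = ∑ j ∈ Finset.range n, φ ((shiftMap Adj)^[j] y) := by
  induction n generalizing y with
  | zero => simp [birk]
  | succ n ih =>
    rw [Finset.sum_range_succ']
    show φ y + birk Adj φ n (shiftMap Adj y) = _
    rw [ih]
    simp only [Function.iterate_succ_apply, Function.iterate_zero, id_eq]
    ring

noncomputable def wt (Adj : S → S → Prop) (φ : MShift Adj → ℝ) (n : ℕ) (y : MShift Adj) : ℝ≥0∞ :=
  ENNReal.ofReal (Real.exp (birk Adj φ n y))

lemma wt_ne_zero (n : ℕ) (y : MShift Adj) : wt Adj φ n y ≠ 0 := by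
  rw [wt, Ne, ENNReal.ofReal_eq_zero, not_le]
  exact Real.exp_pos _

lemma wt_ne_top (n : ℕ) (y : MShift Adj) : wt Adj φ n y ≠ ⊤ := ENNReal.ofReal_ne_top

def sigEquiv (Adj : S → S → Prop) (n : ℕ) (x : MShift Adj) :
    (Σ y : {y : MShift Adj // (shiftMap Adj)^[n] y = x},
        {z : MShift Adj // shiftMap Adj z = y.1}) ≃
      {z : MShift Adj // (shiftMap Adj)^[n+1] z = x} where
  toFun p := ⟨p.2.1, by rw [Function.iterate_succ_apply, p.2.2, p.1.2]⟩
  invFun z := ⟨⟨shiftMap Adj z.1, by rw [← Function.iterate_succ_apply, z.2]⟩, ⟨z.1, rfl⟩⟩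
  left_inv p := by
    rcases p with ⟨⟨y, hy⟩, ⟨z, hz⟩⟩
    dsimp only at hz
    subst hz
    rfl
  right_inv z := rfl

lemma ruelle_iter (f : MShift Adj → ℝ≥0∞) (n : ℕ) (x : MShift Adj) :
    ((Ruelle Adj φ)^[n] f) x
      = ∑' y : {y : MShift Adj // (shiftMap Adj)^[n] y = x}, wt Adj φ n y.1 * f y.1 := by
  induction n generalizing f with
  | zero =>
    have h1 : ∀ (y : {y : MShift Adj // (shiftMap Adj)^[0] y = x}),
        y ≠ ⟨x, rfl⟩ → wt Adj φ 0 y.1 * f y.1 = 0 := by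
      rintro ⟨y, hy⟩ hne
      exact absurd (Subtype.ext hy) hne
    rw [Function.iterate_zero, id_eq, tsum_eq_single _ h1]
    simp [wt, birk]
  | succ n ih =>
    rw [Function.iterate_succ_apply, ih (Ruelle Adj φ f)]
    have step : ∀ y : {y : MShift Adj // (shiftMap Adj)^[n] y = x},
        wt Adj φ n y.1 * Ruelle Adj φ f y.1
          = ∑' z : {z : MShift Adj // shiftMap Adj z = y.1},
              wt Adj φ n y.1 * (ENNReal.ofReal (Real.exp (φ z.1)) * f z.1) := by
      intro y
      rw [Ruelle, ENNReal.tsum_mul_left]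
    rw [tsum_congr step,
      ← ENNReal.tsum_sigma' (fun p : (Σ y : {y : MShift Adj // (shiftMap Adj)^[n] y = x},
          {z : MShift Adj // shiftMap Adj z = y.1}) =>
          wt Adj φ n p.1.1 * (ENNReal.ofReal (Real.exp (φ p.2.1)) * f p.2.1)),
      ← (sigEquiv Adj n x).tsum_eq]
    refine tsum_congr fun p => ?_
    rcases p with ⟨⟨y, hy⟩, ⟨z, hz⟩⟩
    show wt Adj φ n y * (ENNReal.ofReal (Real.exp (φ z)) * f z) = wt Adj φ (n+1) z * f z
    dsimp only at hz
    subst hz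
    rw [wt, wt]
    show _ = ENNReal.ofReal (Real.exp (φ z + birk Adj φ n (shiftMap Adj z))) * f z
    rw [Real.exp_add, ENNReal.ofReal_mul (Real.exp_nonneg _), mul_assoc]
    ring

lemma ruelle_iterate_mono {f g : MShift Adj → ℝ≥0∞} (h : ∀ y, f y ≤ g y) (n : ℕ)
    (x : MShift Adj) : ((Ruelle Adj φ)^[n] f) x ≤ ((Ruelle Adj φ)^[n] g) x := by
  rw [ruelle_iter, ruelle_iter]
  exact ENNReal.tsum_le_tsum fun y => mul_le_mul_right (h y.1) _

lemma green_mono {lam : ℝ} {f g : MShift Adj → ℝ≥0∞} (h : ∀ y, f y ≤ g y) (x : MShift Adj) :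
    Green Adj φ lam f x ≤ Green Adj φ lam g x :=
  ENNReal.tsum_le_tsum fun n => mul_le_mul_right (ruelle_iterate_mono h n x) _

lemma ruelle_iterate_smul (n : ℕ) (c : ℝ≥0∞) (f : MShift Adj → ℝ≥0∞) (x : MShift Adj) :
    ((Ruelle Adj φ)^[n] fun y => c * f y) x = c * ((Ruelle Adj φ)^[n] f) x := by
  rw [ruelle_iter, ruelle_iter, ← ENNReal.tsum_mul_left]
  exact tsum_congr fun y => by ring

lemma green_smul (lam : ℝ) (c : ℝ≥0∞) (f : MShift Adj → ℝ≥0∞) (x : MShift Adj) :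
    Green Adj φ lam (fun y => c * f y) x = c * Green Adj φ lam f x := by
  rw [Green, Green, ← ENNReal.tsum_mul_left]
  exact tsum_congr fun n => by rw [ruelle_iterate_smul]; ring

lemma ruelle_iterate_add (n : ℕ) (f g : MShift Adj → ℝ≥0∞) (x : MShift Adj) :
    ((Ruelle Adj φ)^[n] fun y => f y + g y) x
      = ((Ruelle Adj φ)^[n] f) x + ((Ruelle Adj φ)^[n] g) x := by
  rw [ruelle_iter, ruelle_iter, ruelle_iter, ← ENNReal.tsum_add]
  exact tsum_congr fun y => by ring

lemma green_add (lam : ℝ) (f g : MShift Adj → ℝ≥0∞) (x : MShift Adj) :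
    Green Adj φ lam (fun y => f y + g y) x = Green Adj φ lam f x + Green Adj φ lam g x := by
  rw [Green, Green, Green, ← ENNReal.tsum_add]
  exact tsum_congr fun n => by rw [ruelle_iterate_add]; ring

lemma ruelle_iterate_zero (n : ℕ) (x : MShift Adj) :
    ((Ruelle Adj φ)^[n] fun _ => (0 : ℝ≥0∞)) x = 0 := by
  rw [ruelle_iter]
  simp

lemma green_zero (lam : ℝ) (x : MShift Adj) :
    Green Adj φ lam (fun _ => (0 : ℝ≥0∞)) x = 0 := by
  rw [Green]
  simp [ruelle_iterate_zero]

/-! ### Concatenation -/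

lemma conc_mem (k : ℕ) (v : ℕ → S) (x : MShift Adj)
    (hv : ∀ i, i + 1 < k → Adj (v i) (v (i + 1)))
    (hj : ∀ i, i + 1 = k → Adj (v i) (x.1 0)) :
    ∀ i, Adj ((fun i => if i < k then v i else x.1 (i - k)) i)
          ((fun i => if i < k then v i else x.1 (i - k)) (i + 1)) := by
  intro i
  by_cases h1 : i + 1 < k
  · simp only [if_pos (by omega : i < k), if_pos h1]
    exact hv i h1
  · by_cases h2 : i + 1 = k
    · simp only [if_pos (by omega : i < k), if_neg (by omega : ¬ i + 1 < k)]
      have h3 : i + 1 - k = 0 := by omega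
      rw [h3]
      exact hj i h2
    · have hik : ¬ i < k := by omega
      simp only [if_neg hik, if_neg (by omega : ¬ i + 1 < k)]
      have h3 : i + 1 - k = (i - k) + 1 := by omega
      rw [h3]
      exact x.2 (i - k)

def conc (k : ℕ) (v : ℕ → S) (x : MShift Adj)
    (hv : ∀ i, i + 1 < k → Adj (v i) (v (i + 1)))
    (hj : ∀ i, i + 1 = k → Adj (v i) (x.1 0)) : MShift Adj :=
  ⟨fun i => if i < k then v i else x.1 (i - k), conc_mem k v x hv hj⟩

lemma conc_apply_lt {k : ℕ} {v : ℕ → S} {x : MShift Adj} {hv} {hj} {i : ℕ} (h : i < k) :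
    (conc k v x hv hj).1 i = v i := if_pos h

lemma conc_apply_ge {k : ℕ} {v : ℕ → S} {x : MShift Adj} {hv} {hj} {i : ℕ} (h : k ≤ i) :
    (conc k v x hv hj).1 i = x.1 (i - k) := if_neg (by omega)

lemma shift_iterate_conc {k : ℕ} {v : ℕ → S} {x : MShift Adj} {hv} {hj} :
    (shiftMap Adj)^[k] (conc k v x hv hj) = x := by
  apply Subtype.ext
  funext i
  rw [shift_iterate_apply]
  show (if i + k < k then v (i + k) else x.1 (i + k - k)) = x.1 i
  rw [if_neg (by omega), Nat.add_sub_cancel]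

/-! ### Variations -/

lemma abs_sub_le_Var (hbdd : ∀ m, BddAbove (varSet Adj φ m)) {m : ℕ} (x y : MShift Adj)
    (h : ∀ i < m, x.1 i = y.1 i) : |φ x - φ y| ≤ Var Adj φ m :=
  le_csSup (hbdd m) ⟨x, y, h, rfl⟩

lemma Var_nonneg (hbdd : ∀ m, BddAbove (varSet Adj φ m)) (p : MShift Adj) (m : ℕ) :
    0 ≤ Var Adj φ m := by
  have := le_csSup (hbdd m) (⟨p, p, fun _ _ => rfl, rfl⟩ : |φ p - φ p| ∈ varSet Adj φ m)
  simp at this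
  exact this

lemma phi_lower (hbdd : ∀ m, BddAbove (varSet Adj φ m)) (p : MShift Adj) (y : MShift Adj) :
    φ p - Var Adj φ 0 ≤ φ y := by
  have h := abs_sub_le_Var hbdd (m := 0) p y (fun i hi => by omega)
  have := abs_le.mp h
  linarith [this.1]

lemma birk_lower (hbdd : ∀ m, BddAbove (varSet Adj φ m)) (p : MShift Adj) (k : ℕ)
    (y : MShift Adj) : (k : ℝ) * (φ p - Var Adj φ 0) ≤ birk Adj φ k y := by
  rw [birk_eq_sum]
  calc (k : ℝ) * (φ p - Var Adj φ 0) = ∑ _j ∈ Finset.range k, (φ p - Var Adj φ 0) := by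
        rw [Finset.sum_const, Finset.card_range, nsmul_eq_mul]
    _ ≤ _ := Finset.sum_le_sum fun j _ => phi_lower hbdd p _

lemma sum_Var_le (hbdd : ∀ m, BddAbove (varSet Adj φ m)) (hsum : Summable (Var Adj φ))
    (p : MShift Adj) (n : ℕ) :
    ∑ j ∈ Finset.range n, Var Adj φ (n + 1 - j) ≤ ∑' m, Var Adj φ m := by
  have hinj : ∀ i ∈ Finset.range n, ∀ j ∈ Finset.range n,
      (n + 1 - i) = (n + 1 - j) → i = j := by
    intro i hi j hj h
    simp only [Finset.mem_range] at hi hj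
    omega
  rw [← Finset.sum_image (f := Var Adj φ) hinj]
  exact Summable.sum_le_tsum _ (fun m _ => Var_nonneg hbdd p m) hsum

lemma birk_comp_le (hbdd : ∀ m, BddAbove (varSet Adj φ m)) (hsum : Summable (Var Adj φ))
    (p : MShift Adj) (n : ℕ) (z w : MShift Adj) (hzw : ∀ i ≤ n, z.1 i = w.1 i) :
    birk Adj φ n z ≤ birk Adj φ n w + ∑' m, Var Adj φ m := by
  rw [birk_eq_sum, birk_eq_sum]
  have key : ∀ j ∈ Finset.range n, φ ((shiftMap Adj)^[j] z)
      ≤ φ ((shiftMap Adj)^[j] w) + Var Adj φ (n + 1 - j) := by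
    intro j hj
    simp only [Finset.mem_range] at hj
    have hagree : ∀ i < n + 1 - j, ((shiftMap Adj)^[j] z).1 i = ((shiftMap Adj)^[j] w).1 i := by
      intro i hi
      rw [shift_iterate_apply, shift_iterate_apply]
      exact hzw (i + j) (by omega)
    have h := abs_le.mp (abs_sub_le_Var hbdd _ _ hagree)
    linarith [h.1]
  calc ∑ j ∈ Finset.range n, φ ((shiftMap Adj)^[j] z)
      ≤ ∑ j ∈ Finset.range n, (φ ((shiftMap Adj)^[j] w) + Var Adj φ (n + 1 - j)) :=
        Finset.sum_le_sum key
    _ = ∑ j ∈ Finset.range n, φ ((shiftMap Adj)^[j] w)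
        + ∑ j ∈ Finset.range n, Var Adj φ (n + 1 - j) := Finset.sum_add_distrib
    _ ≤ _ := by linarith [sum_Var_le hbdd hsum p n]

/-! ### Word cylinders -/

def cylW (Adj : S → S → Prop) (m : ℕ) (a : ℕ → S) : Set (MShift Adj) :=
  {x | ∀ i < m, x.1 i = a i}

noncomputable def cylWInd (Adj : S → S → Prop) (m : ℕ) (a : ℕ → S) : MShift Adj → ℝ≥0∞ :=
  (cylW Adj m a).indicator 1

lemma cylWInd_le_one (m : ℕ) (a : ℕ → S) (y : MShift Adj) : cylWInd Adj m a y ≤ 1 := by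
  rw [cylWInd]
  by_cases h : y ∈ cylW Adj m a
  · rw [Set.indicator_of_mem h]; rfl
  · rw [Set.indicator_of_notMem h]; exact zero_le

lemma ruelle_iterate_cylW_ne_top (m n : ℕ) (hnm : n ≤ m) (a : ℕ → S) (x : MShift Adj) :
    ((Ruelle Adj φ)^[n] (cylWInd Adj m a)) x ≠ ⊤ := by
  classical
  rw [ruelle_iter]
  set F : {y : MShift Adj // (shiftMap Adj)^[n] y = x} → ℝ≥0∞ :=
    fun y => wt Adj φ n y.1 * cylWInd Adj m a y.1 with hF
  have hdet : ∀ y, F y ≠ 0 → ∀ i, y.1.1 i = if i < n then a i else x.1 (i - n) := by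
    intro y hy i
    have hmem : y.1 ∈ cylW Adj m a := by
      by_contra hmem
      apply hy
      rw [hF]
      simp [cylWInd, Set.indicator_of_notMem hmem]
    split
    · exact hmem _ (lt_of_lt_of_le ‹_› hnm)
    · have h1 := shift_iterate_apply n y.1 (i - n)
      rw [y.2, Nat.sub_add_cancel (by omega)] at h1
      exact h1.symm
  have hne_top : ∀ y, F y ≠ ⊤ := fun y =>
    ENNReal.mul_ne_top (wt_ne_top _ _)
      (lt_of_le_of_lt (cylWInd_le_one m a y.1) ENNReal.one_lt_top).ne
  by_cases hex : ∃ y, F y ≠ 0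
  · obtain ⟨y0, hy0⟩ := hex
    have huniq : ∀ y, y ≠ y0 → F y = 0 := by
      intro y hne
      by_contra hy
      apply hne
      apply Subtype.ext
      apply Subtype.ext
      funext i
      rw [hdet y hy i, hdet y0 hy0 i]
    rw [tsum_eq_single y0 huniq]
    exact hne_top y0
  · push_neg at hex
    rw [tsum_congr hex, tsum_zero]
    exact zero_ne_top

lemma ruelle_cylW_compare (hbdd : ∀ m, BddAbove (varSet Adj φ m))
    (hsum : Summable (Var Adj φ)) (m n : ℕ) (hmn : m ≤ n) (a : ℕ → S)
    (x y : MShift Adj) (h0 : x.1 0 = y.1 0) :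
    ((Ruelle Adj φ)^[n] (cylWInd Adj m a)) x
      ≤ ENNReal.ofReal (Real.exp (∑' j, Var Adj φ j))
          * ((Ruelle Adj φ)^[n] (cylWInd Adj m a)) y := by
  rw [ruelle_iter, ruelle_iter, ← ENNReal.tsum_mul_left]
  have hzn : ∀ z : {z : MShift Adj // (shiftMap Adj)^[n] z = x}, z.1.1 n = y.1 0 := by
    intro z
    have h1 := shift_iterate_apply n z.1 0
    rw [z.2, Nat.zero_add] at h1
    rw [← h0, h1]
  have hjun : ∀ z : {z : MShift Adj // (shiftMap Adj)^[n] z = x},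
      ∀ i, i + 1 = n → Adj (z.1.1 i) (y.1 0) := by
    intro z i hi
    have h2 := z.1.2 i
    rwa [show i + 1 = n from hi, hzn z] at h2
  let ι : {z : MShift Adj // (shiftMap Adj)^[n] z = x} →
      {w : MShift Adj // (shiftMap Adj)^[n] w = y} :=
    fun z => ⟨conc n z.1.1 y (fun i _ => z.1.2 i) (hjun z), shift_iterate_conc⟩
  have hιlt : ∀ (z : {z : MShift Adj // (shiftMap Adj)^[n] z = x}) (i : ℕ), i < n →
      (ι z).1.1 i = z.1.1 i := by
    intro z i hi
    show (conc n z.1.1 y (fun i _ => z.1.2 i) (hjun z)).1 i = z.1.1 i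
    exact conc_apply_lt hi
  have hιn : ∀ z, (ι z).1.1 n = y.1 0 := by
    intro z
    show (conc n z.1.1 y (fun i _ => z.1.2 i) (hjun z)).1 n = y.1 0
    rw [conc_apply_ge le_rfl, Nat.sub_self]
  have hι_inj : Function.Injective ι := by
    intro z z' h
    have hcoord : ∀ i, z.1.1 i = z'.1.1 i := by
      intro i
      by_cases hi : i < n
      · have h3 := congrArg (fun w => w.1.1 i) h
        rw [hιlt z i hi, hιlt z' i hi] at h3
        exact h3
      · have e1 := shift_iterate_apply n z.1 (i - n)
        rw [z.2] at e1
        have e2 := shift_iterate_apply n z'.1 (i - n)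
        rw [z'.2] at e2
        have hin : i - n + n = i := by omega
        rw [hin] at e1 e2
        rw [← e1, ← e2]
    exact Subtype.ext (Subtype.ext (funext hcoord))
  have hterm : ∀ z, wt Adj φ n z.1 * cylWInd Adj m a z.1
      ≤ ENNReal.ofReal (Real.exp (∑' j, Var Adj φ j))
          * (wt Adj φ n (ι z).1 * cylWInd Adj m a (ι z).1) := by
    intro z
    have hind : cylWInd Adj m a (ι z).1 = cylWInd Adj m a z.1 := by
      have hiff : (ι z).1 ∈ cylW Adj m a ↔ z.1 ∈ cylW Adj m a := by
        constructor <;> intro hm i him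
        · rw [← hιlt z i (lt_of_lt_of_le him hmn)]
          exact hm i him
        · rw [hιlt z i (lt_of_lt_of_le him hmn)]
          exact hm i him
      rw [cylWInd]
      by_cases hc : z.1 ∈ cylW Adj m a
      · rw [Set.indicator_of_mem hc, Set.indicator_of_mem (hiff.mpr hc)]
        rfl
      · rw [Set.indicator_of_notMem hc, Set.indicator_of_notMem (fun hcc => hc (hiff.mp hcc))]
    have hzw : ∀ i ≤ n, z.1.1 i = (ι z).1.1 i := by
      intro i hi
      rcases lt_or_eq_of_le hi with hi' | hi'
      · rw [hιlt z i hi']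
      · subst hi'
        rw [hιn z, hzn z]
    have hbk := birk_comp_le hbdd hsum x n z.1 (ι z).1 hzw
    have hwt : wt Adj φ n z.1 ≤
        ENNReal.ofReal (Real.exp (∑' j, Var Adj φ j)) * wt Adj φ n (ι z).1 := by
      rw [wt, wt, ← ENNReal.ofReal_mul (Real.exp_nonneg _), ← Real.exp_add]
      apply ENNReal.ofReal_le_ofReal
      apply Real.exp_le_exp.mpr
      linarith
    rw [hind, ← mul_assoc]
    exact mul_le_mul_left hwt _
  calc ∑' z : {z : MShift Adj // (shiftMap Adj)^[n] z = x}, wt Adj φ n z.1 * cylWInd Adj m a z.1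
      ≤ ∑' z : {z : MShift Adj // (shiftMap Adj)^[n] z = x},
          (fun w : {w : MShift Adj // (shiftMap Adj)^[n] w = y} =>
            ENNReal.ofReal (Real.exp (∑' j, Var Adj φ j))
              * (wt Adj φ n w.1 * cylWInd Adj m a w.1)) (ι z) :=
        ENNReal.tsum_le_tsum hterm
    _ ≤ _ := ENNReal.tsum_comp_le_tsum_of_injective hι_inj _

lemma green_preim {lam : ℝ} (hlam : 0 < lam) (f : MShift Adj → ℝ≥0∞) (k : ℕ)
    (z x₀ : MShift Adj) (hz : (shiftMap Adj)^[k] z = x₀)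
    (hfin : Green Adj φ lam f x₀ ≠ ⊤) : Green Adj φ lam f z ≠ ⊤ := by
  intro hcon
  apply hfin
  have key : ∀ n : ℕ, wt Adj φ k z * (ENNReal.ofReal ((lam ^ k)⁻¹) *
      (ENNReal.ofReal ((lam ^ n)⁻¹) * ((Ruelle Adj φ)^[n] f) z))
      ≤ ENNReal.ofReal ((lam ^ (n + k))⁻¹) * ((Ruelle Adj φ)^[n + k] f) x₀ := by
    intro n
    have h1 : wt Adj φ k z * ((Ruelle Adj φ)^[n] f) z ≤ ((Ruelle Adj φ)^[n + k] f) x₀ := by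
      have he : (Ruelle Adj φ)^[n + k] f = (Ruelle Adj φ)^[k] ((Ruelle Adj φ)^[n] f) := by
        rw [add_comm, Function.iterate_add_apply]
      rw [he, ruelle_iter ((Ruelle Adj φ)^[n] f) k x₀]
      exact ENNReal.le_tsum (⟨z, hz⟩ : {y : MShift Adj // (shiftMap Adj)^[k] y = x₀})
    have h2 : ENNReal.ofReal ((lam ^ (n + k))⁻¹)
        = ENNReal.ofReal ((lam ^ k)⁻¹) * ENNReal.ofReal ((lam ^ n)⁻¹) := by
      rw [← ENNReal.ofReal_mul (by positivity)]
      congr 1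
      rw [pow_add]
      field_simp
    rw [h2]
    calc wt Adj φ k z * (ENNReal.ofReal ((lam ^ k)⁻¹)
          * (ENNReal.ofReal ((lam ^ n)⁻¹) * ((Ruelle Adj φ)^[n] f) z))
        = ENNReal.ofReal ((lam ^ k)⁻¹) * ENNReal.ofReal ((lam ^ n)⁻¹)
            * (wt Adj φ k z * ((Ruelle Adj φ)^[n] f) z) := by ring
      _ ≤ _ := mul_le_mul_right h1 _
  have hsum2 : ∑' n : ℕ, ENNReal.ofReal ((lam ^ (n + k))⁻¹) * ((Ruelle Adj φ)^[n + k] f) x₀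
      ≤ Green Adj φ lam f x₀ :=
    ENNReal.tsum_comp_le_tsum_of_injective
      (f := fun n : ℕ => n + k) (fun a b h => Nat.add_right_cancel h)
      (fun j => ENNReal.ofReal ((lam ^ j)⁻¹) * ((Ruelle Adj φ)^[j] f) x₀)
  have h3 : wt Adj φ k z * (ENNReal.ofReal ((lam ^ k)⁻¹) * Green Adj φ lam f z)
      ≤ Green Adj φ lam f x₀ := by
    rw [Green, ← ENNReal.tsum_mul_left, ← ENNReal.tsum_mul_left]
    exact le_trans (ENNReal.tsum_le_tsum key) hsum2
  rw [hcon, ENNReal.mul_top (by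
      rw [Ne, ENNReal.ofReal_eq_zero, not_le]
      positivity),
    ENNReal.mul_top (wt_ne_zero k z)] at h3
  exact top_le_iff.mp h3

lemma green_cylA_le_green_cylW (hbdd : ∀ m, BddAbove (varSet Adj φ m)) {lam : ℝ}
    (hlam : 0 < lam) (p : MShift Adj) (m : ℕ) (hm : 0 < m) (a : ℕ → S) (b : S)
    (k : ℕ) (v : ℕ → S)
    (h1 : ∀ i, i + 1 < k → Adj (v i) (v (i + 1))) (h2 : ∀ i, i + 1 = k → Adj (v i) b)
    (h3 : ∀ i, i < m → i < k → v i = a i) (h4 : k < m → k + 1 = m ∧ b = a (m - 1))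
    (x : MShift Adj) :
    Green Adj φ lam (cylInd Adj b) x ≤
      ENNReal.ofReal (lam ^ k)
        * ENNReal.ofReal (Real.exp ((k : ℝ) * (Var Adj φ 0 - φ p)))
        * Green Adj φ lam (cylWInd Adj m a) x := by
  classical
  -- the key pointwise estimate for each n
  have main : ∀ n : ℕ, ((Ruelle Adj φ)^[n] (cylInd Adj b)) x
      ≤ ENNReal.ofReal (Real.exp ((k : ℝ) * (Var Adj φ 0 - φ p)))
          * ((Ruelle Adj φ)^[k + n] (cylWInd Adj m a)) x := by
    intro n
    rw [ruelle_iter, ruelle_iter]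
    set sset : Set {z : MShift Adj // (shiftMap Adj)^[n] z = x} := {z | z.1.1 0 = b} with hsset
    have hres : ∑' z : {z : MShift Adj // (shiftMap Adj)^[n] z = x},
        wt Adj φ n z.1 * cylInd Adj b z.1
        = ∑' z : sset, wt Adj φ n z.1.1 := by
      rw [tsum_subtype sset (fun z => wt Adj φ n z.1)]
      refine tsum_congr fun z => ?_
      by_cases hzb : z.1.1 0 = b
      · rw [Set.indicator_of_mem (by exact hzb : z ∈ sset)]
        rw [cylInd, Set.indicator_of_mem (by exact hzb : z.1 ∈ cylA Adj b)]
        show wt Adj φ n z.1 * 1 = wt Adj φ n z.1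
        rw [mul_one]
      · rw [Set.indicator_of_notMem (by exact hzb : ¬ z ∈ sset)]
        rw [cylInd, Set.indicator_of_notMem (by exact hzb : ¬ z.1 ∈ cylA Adj b), mul_zero]
    rw [hres]
    -- the injection
    have hz2 : ∀ z : sset, z.1.1.1 0 = b := fun z => z.2
    have hjun : ∀ z : sset, ∀ i, i + 1 = k → Adj (v i) (z.1.1.1 0) := by
      intro z i hi
      rw [hz2 z]
      exact h2 i hi
    let ι : sset → {w : MShift Adj // (shiftMap Adj)^[k + n] w = x} :=
      fun z => ⟨conc k v z.1.1 h1 (hjun z), by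
        rw [add_comm, Function.iterate_add_apply, shift_iterate_conc, z.1.2]⟩
    have hshift : ∀ z, (shiftMap Adj)^[k] (ι z).1 = z.1.1 := by
      intro z
      show (shiftMap Adj)^[k] (conc k v z.1.1 h1 (hjun z)) = z.1.1
      exact shift_iterate_conc
    have hι_inj : Function.Injective ι := by
      intro z z' h
      have hh := congrArg (fun w => (shiftMap Adj)^[k] w.1) h
      rw [hshift z, hshift z'] at hh
      exact Subtype.ext (Subtype.ext hh)
    have hmem : ∀ z, (ι z).1 ∈ cylW Adj m a := by
      intro z i him
      show (conc k v z.1.1 h1 (hjun z)).1 i = a i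
      by_cases hik : i < k
      · rw [conc_apply_lt hik]
        exact h3 i him hik
      · have hkm : k < m := by omega
        obtain ⟨hk1, hb⟩ := h4 hkm
        have hik' : i = k := by omega
        subst hik'
        rw [conc_apply_ge le_rfl, Nat.sub_self, hz2 z, hb]
        congr 1
        omega
    have hterm : ∀ z : sset, wt Adj φ n z.1.1
        ≤ ENNReal.ofReal (Real.exp ((k : ℝ) * (Var Adj φ 0 - φ p)))
            * (wt Adj φ (k + n) (ι z).1 * cylWInd Adj m a (ι z).1) := by
      intro z
      rw [cylWInd, Set.indicator_of_mem (hmem z)]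
      show wt Adj φ n z.1.1 ≤ _ * (wt Adj φ (k + n) (ι z).1 * 1)
      rw [mul_one, wt, wt, ← ENNReal.ofReal_mul (Real.exp_nonneg _), ← Real.exp_add]
      apply ENNReal.ofReal_le_ofReal
      apply Real.exp_le_exp.mpr
      have hb1 : birk Adj φ (k + n) (ι z).1
          = birk Adj φ k (ι z).1 + birk Adj φ n z.1.1 := by
        rw [birk_add, hshift z]
      have hb2 := birk_lower hbdd p k (ι z).1
      rw [hb1]
      have hlin : (k : ℝ) * (Var Adj φ 0 - φ p) = -((k : ℝ) * (φ p - Var Adj φ 0)) := by ring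
      rw [hlin]
      linarith
    calc ∑' z : sset, wt Adj φ n z.1.1
        ≤ ∑' z : sset,
            (fun w : {w : MShift Adj // (shiftMap Adj)^[k + n] w = x} =>
              ENNReal.ofReal (Real.exp ((k : ℝ) * (Var Adj φ 0 - φ p)))
                * (wt Adj φ (k + n) w.1 * cylWInd Adj m a w.1)) (ι z) :=
          ENNReal.tsum_le_tsum hterm
      _ ≤ ∑' w : {w : MShift Adj // (shiftMap Adj)^[k + n] w = x},
            ENNReal.ofReal (Real.exp ((k : ℝ) * (Var Adj φ 0 - φ p)))
              * (wt Adj φ (k + n) w.1 * cylWInd Adj m a w.1) :=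
          ENNReal.tsum_comp_le_tsum_of_injective hι_inj _
      _ = _ := ENNReal.tsum_mul_left
  -- now sum over n
  have hlamsplit : ∀ n : ℕ, ENNReal.ofReal ((lam ^ n)⁻¹)
      = ENNReal.ofReal (lam ^ k) * ENNReal.ofReal ((lam ^ (k + n))⁻¹) := by
    intro n
    rw [← ENNReal.ofReal_mul (by positivity)]
    congr 1
    rw [pow_add]
    field_simp
  have hcomp : ∑' n : ℕ, ENNReal.ofReal ((lam ^ (k + n))⁻¹)
        * ((Ruelle Adj φ)^[k + n] (cylWInd Adj m a)) x
      ≤ Green Adj φ lam (cylWInd Adj m a) x :=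
    ENNReal.tsum_comp_le_tsum_of_injective
      (f := fun n : ℕ => k + n) (fun c d h => Nat.add_left_cancel h)
      (fun j => ENNReal.ofReal ((lam ^ j)⁻¹) * ((Ruelle Adj φ)^[j] (cylWInd Adj m a)) x)
  calc Green Adj φ lam (cylInd Adj b) x
      ≤ ∑' n : ℕ, ENNReal.ofReal (lam ^ k)
          * ENNReal.ofReal (Real.exp ((k : ℝ) * (Var Adj φ 0 - φ p)))
          * (ENNReal.ofReal ((lam ^ (k + n))⁻¹)
              * ((Ruelle Adj φ)^[k + n] (cylWInd Adj m a)) x) := by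
        rw [Green]
        refine ENNReal.tsum_le_tsum fun n => ?_
        rw [hlamsplit n]
        calc ENNReal.ofReal (lam ^ k) * ENNReal.ofReal ((lam ^ (k + n))⁻¹)
              * ((Ruelle Adj φ)^[n] (cylInd Adj b)) x
            ≤ ENNReal.ofReal (lam ^ k) * ENNReal.ofReal ((lam ^ (k + n))⁻¹)
              * (ENNReal.ofReal (Real.exp ((k : ℝ) * (Var Adj φ 0 - φ p)))
                  * ((Ruelle Adj φ)^[k + n] (cylWInd Adj m a)) x) :=
              mul_le_mul_right (main n) _
          _ = _ := by ring
    _ = ENNReal.ofReal (lam ^ k) * ENNReal.ofReal (Real.exp ((k : ℝ) * (Var Adj φ 0 - φ p)))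
          * ∑' n : ℕ, ENNReal.ofReal ((lam ^ (k + n))⁻¹)
              * ((Ruelle Adj φ)^[k + n] (cylWInd Adj m a)) x := ENNReal.tsum_mul_left
    _ ≤ _ := mul_le_mul_right hcomp _

lemma green_finset_sum {ι : Type*} (lam : ℝ) (s : Finset ι) (h : ι → MShift Adj → ℝ≥0∞)
    (x : MShift Adj) :
    Green Adj φ lam (fun y => ∑ b ∈ s, h b y) x = ∑ b ∈ s, Green Adj φ lam (h b) x := by
  classical
  induction s using Finset.induction_on with
  | empty =>
    simp only [Finset.sum_empty]
    exact green_zero lam x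
  | @insert c t hc ih =>
    simp only [Finset.sum_insert hc]
    rw [green_add lam (h c) (fun y => ∑ b ∈ t, h b y) x, ih]

end GFE

/-- If the Green's function `G(f₀, x₀ | λ)` is finite for a single non-zero
`f₀ ∈ C_c⁺(X⁺)` and a single point `x₀`, then `G(f, x | λ)` is finite for every
`f ∈ C_c⁺(X⁺)` and every `x`. -/
theorem green_finite_everywhere [Countable S] [TopologicalSpace S] [DiscreteTopology S]
    (Adj : S → S → Prop) (htrans : TransitiveShift Adj) (hloc : LocFin Adj)
    (φ : MShift Adj → ℝ) (hvar : SummableVar Adj φ) (lam : ℝ) (hlam : 0 < lam)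
    (f₀ : MShift Adj → ℝ) (hf₀c : Continuous f₀) (hf₀s : HasCompactSupport f₀)
    (hf₀nn : 0 ≤ f₀) (hf₀ne : f₀ ≠ 0) (x₀ : MShift Adj)
    (hfin : Green Adj φ lam (ofR f₀) x₀ ≠ ⊤) :
    ∀ (f : MShift Adj → ℝ) (x : MShift Adj), Continuous f → HasCompactSupport f → 0 ≤ f →
      Green Adj φ lam (ofR f) x ≠ ⊤ := by
  classical
  obtain ⟨hbdd, hsum⟩ := hvar
  intro f x hfc hfs hfnn
  -- a point where f₀ is positive
  obtain ⟨xs, hxs⟩ : ∃ y, f₀ y ≠ 0 := Function.ne_iff.mp hf₀ne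
  have hxspos : 0 < f₀ xs := lt_of_le_of_ne (hf₀nn xs) (Ne.symm hxs)
  set c : ℝ := f₀ xs / 2 with hcdef
  have hcpos : 0 < c := by positivity
  -- a cylinder neighborhood of xs on which f₀ > c
  have hUopen : IsOpen {y : MShift Adj | c < f₀ y} := isOpen_lt continuous_const hf₀c
  obtain ⟨V, hVopen, hVeq⟩ := isOpen_induced_iff.mp hUopen
  have hxsV : xs.1 ∈ V := by
    have : xs ∈ Subtype.val ⁻¹' V := by
      rw [hVeq]
      show c < f₀ xs
      rw [hcdef]
      linarith
    exact this
  obtain ⟨I, u, hIu, hIsub⟩ := isOpen_pi_iff.mp hVopen xs.1 hxsV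
  set m : ℕ := I.sup id + 1 with hmdef
  have hm : 0 < m := Nat.succ_pos _
  have hcylsub : ∀ y : MShift Adj, (∀ i < m, y.1 i = xs.1 i) → c < f₀ y := by
    intro y hy
    have hyV : y.1 ∈ V := by
      apply hIsub
      intro i hi
      have him : i < m := by
        have hle := Finset.le_sup (f := id) hi
        simp only [id] at hle
        omega
      rw [hy i him]
      exact (hIu i hi).2
    have : y ∈ Subtype.val ⁻¹' V := hyV
    rw [hVeq] at this
    exact this
  set C : MShift Adj → ℝ≥0∞ := GFE.cylWInd Adj m xs.1 with hCdef
  -- Green of C at x₀ is finite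
  have hpt : ∀ y, ENNReal.ofReal c * C y ≤ ofR f₀ y := by
    intro y
    rw [hCdef, GFE.cylWInd]
    by_cases hy : y ∈ GFE.cylW Adj m xs.1
    · rw [Set.indicator_of_mem hy]
      show ENNReal.ofReal c * 1 ≤ ENNReal.ofReal (f₀ y)
      rw [mul_one]
      exact ENNReal.ofReal_le_ofReal (le_of_lt (hcylsub y hy))
    · rw [Set.indicator_of_notMem hy, mul_zero]
      exact zero_le
  have hCx₀ : Green Adj φ lam C x₀ ≠ ⊤ := by
    intro hCtop
    apply hfin
    have h1 : ENNReal.ofReal c * Green Adj φ lam C x₀ ≤ Green Adj φ lam (ofR f₀) x₀ := by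
      rw [← GFE.green_smul]
      exact GFE.green_mono hpt x₀
    rw [hCtop, ENNReal.mul_top (by
      rw [Ne, ENNReal.ofReal_eq_zero, not_le]
      exact hcpos)] at h1
    exact top_le_iff.mp h1
  -- Green of C is finite everywhere
  have hCall : ∀ z : MShift Adj, Green Adj φ lam C z ≠ ⊤ := by
    intro z
    obtain ⟨n, w, hw0, hwn⟩ := htrans (z.1 0) (x₀.1 0)
    have hwn' : w.1 n = x₀.1 0 := by
      rw [GFE.shift_iterate_apply] at hwn
      simpa using hwn
    have hjz : ∀ i, i + 1 = n → Adj (w.1 i) (x₀.1 0) := by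
      intro i hi
      have h2 := w.2 i
      rwa [show i + 1 = n from hi, hwn'] at h2
    set z' := GFE.conc n w.1 x₀ (fun i _ => w.2 i) hjz with hz'def
    have hz'shift : (shiftMap Adj)^[n] z' = x₀ := GFE.shift_iterate_conc
    have hz'0 : z.1 0 = z'.1 0 := by
      by_cases hn : 0 < n
      · rw [hz'def, GFE.conc_apply_lt hn, hw0]
      · have hn0 : n = 0 := by omega
        subst hn0
        rw [hz'def, GFE.conc_apply_ge le_rfl, ← hwn', hw0]
    have hGz' : Green Adj φ lam C z' ≠ ⊤ := GFE.green_preim hlam C n z' x₀ hz'shift hCx₀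
    set VV : ℝ := ∑' j, Var Adj φ j with hVVdef
    have hsplit : ∀ nn : ℕ, ENNReal.ofReal ((lam ^ nn)⁻¹) * ((Ruelle Adj φ)^[nn] C) z
        ≤ (if nn < m then ENNReal.ofReal ((lam ^ nn)⁻¹) * ((Ruelle Adj φ)^[nn] C) z else 0)
          + ENNReal.ofReal (Real.exp VV)
            * (ENNReal.ofReal ((lam ^ nn)⁻¹) * ((Ruelle Adj φ)^[nn] C) z') := by
      intro nn
      by_cases hnn : nn < m
      · rw [if_pos hnn]
        exact le_add_right le_rfl
      · rw [if_neg hnn, zero_add]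
        have hcmp := GFE.ruelle_cylW_compare hbdd hsum m nn (le_of_not_gt hnn) xs.1 z z' hz'0
        calc ENNReal.ofReal ((lam ^ nn)⁻¹) * ((Ruelle Adj φ)^[nn] C) z
            ≤ ENNReal.ofReal ((lam ^ nn)⁻¹)
              * (ENNReal.ofReal (Real.exp VV) * ((Ruelle Adj φ)^[nn] C) z') :=
              mul_le_mul_right hcmp _
          _ = _ := by ring
    have hG : Green Adj φ lam C z
        ≤ (∑' nn : ℕ, if nn < m then
              ENNReal.ofReal ((lam ^ nn)⁻¹) * ((Ruelle Adj φ)^[nn] C) z else 0)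
          + ENNReal.ofReal (Real.exp VV) * Green Adj φ lam C z' := by
      calc Green Adj φ lam C z
          ≤ ∑' nn : ℕ, ((if nn < m then
                ENNReal.ofReal ((lam ^ nn)⁻¹) * ((Ruelle Adj φ)^[nn] C) z else 0)
              + ENNReal.ofReal (Real.exp VV)
                * (ENNReal.ofReal ((lam ^ nn)⁻¹) * ((Ruelle Adj φ)^[nn] C) z')) :=
            ENNReal.tsum_le_tsum hsplit
        _ = _ := by rw [ENNReal.tsum_add, ENNReal.tsum_mul_left, Green]
    have hhead : (∑' nn : ℕ, if nn < m then
        ENNReal.ofReal ((lam ^ nn)⁻¹) * ((Ruelle Adj φ)^[nn] C) z else 0) ≠ ⊤ := by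
      rw [tsum_eq_sum (s := Finset.range m)
        (fun nn hnn => if_neg (by simpa using hnn))]
      refine (ENNReal.sum_lt_top.mpr fun nn hnn => ?_).ne
      rw [Finset.mem_range] at hnn
      rw [if_pos hnn]
      exact ENNReal.mul_lt_top ENNReal.ofReal_lt_top
        (GFE.ruelle_iterate_cylW_ne_top m nn (by omega) xs.1 z).lt_top
    exact ne_top_of_le_ne_top
      (ENNReal.add_ne_top.mpr ⟨hhead, ENNReal.mul_ne_top ENNReal.ofReal_ne_top hGz'⟩) hG
  -- Green of single-symbol cylinders is finite everywhere
  have hball : ∀ (b : S) (z : MShift Adj), Green Adj φ lam (cylInd Adj b) z ≠ ⊤ := by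
    intro b z
    obtain ⟨j, zz, hzz0, hzzj⟩ := htrans (xs.1 (m - 1)) b
    have hzzj' : zz.1 j = b := by
      rw [GFE.shift_iterate_apply] at hzzj
      simpa using hzzj
    set k : ℕ := (m - 1) + j with hkdef
    set v : ℕ → S := fun i => if i < m - 1 then xs.1 i else zz.1 (i - (m - 1)) with hvdef
    have h1 : ∀ i, i + 1 < k → Adj (v i) (v (i + 1)) := by
      intro i hi
      by_cases hA : i + 1 < m - 1
      · simp only [hvdef, if_pos (by omega : i < m - 1), if_pos hA]
        exact xs.2 i
      · by_cases hB : i + 1 = m - 1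
        · simp only [hvdef, if_pos (by omega : i < m - 1), if_neg (by omega : ¬ i + 1 < m - 1)]
          have h5 : i + 1 - (m - 1) = 0 := by omega
          rw [h5, hzz0, ← hB]
          exact xs.2 i
        · simp only [hvdef, if_neg (by omega : ¬ i < m - 1), if_neg (by omega : ¬ i + 1 < m - 1)]
          have h5 : i + 1 - (m - 1) = (i - (m - 1)) + 1 := by omega
          rw [h5]
          exact zz.2 _
    have h2 : ∀ i, i + 1 = k → Adj (v i) b := by
      intro i hi
      by_cases hA : i < m - 1
      · have hj0 : j = 0 := by omega
        have him : i + 1 = m - 1 := by omega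
        simp only [hvdef, if_pos hA]
        rw [← hzzj', hj0, hzz0, ← him]
        exact xs.2 i
      · simp only [hvdef, if_neg hA]
        have h6 : i - (m - 1) + 1 = j := by omega
        have h7 := zz.2 (i - (m - 1))
        rwa [h6, hzzj'] at h7
    have h3 : ∀ i, i < m → i < k → v i = xs.1 i := by
      intro i him hik
      by_cases hA : i < m - 1
      · simp only [hvdef, if_pos hA]
      · have hieq : i = m - 1 := by omega
        simp only [hvdef, if_neg hA]
        have h8 : i - (m - 1) = 0 := by omega
        rw [h8, hzz0, hieq]
    have h4 : k < m → k + 1 = m ∧ b = xs.1 (m - 1) := by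
      intro hkm
      have hj0 : j = 0 := by omega
      refine ⟨by omega, ?_⟩
      rw [← hzzj', hj0, hzz0]
    have hle := GFE.green_cylA_le_green_cylW hbdd hlam xs m hm xs.1 b k v h1 h2 h3 h4 z
    exact ne_top_of_le_ne_top
      (ENNReal.mul_ne_top (ENNReal.mul_ne_top ENNReal.ofReal_ne_top ENNReal.ofReal_ne_top)
        (hCall z)) hle
  -- conclude for f
  obtain ⟨M, hM⟩ := hfc.bddAbove_range_of_hasCompactSupport hfs
  have hMy : ∀ y, f y ≤ M := fun y => hM ⟨y, rfl⟩
  have hTfin : Set.Finite ((fun y : MShift Adj => y.1 0) '' tsupport f) :=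
    (hfs.image ((continuous_apply 0).comp continuous_subtype_val)).finite_of_discrete
  set Fs : Finset S := hTfin.toFinset with hFsdef
  have hdom : ∀ y, ofR f y ≤ ∑ b ∈ Fs, ENNReal.ofReal M * cylInd Adj b y := by
    intro y
    by_cases hy : f y = 0
    · show ENNReal.ofReal (f y) ≤ _
      rw [hy, ENNReal.ofReal_zero]
      exact zero_le
    · have hyT : y ∈ tsupport f := subset_tsupport f hy
      have hbF : y.1 0 ∈ Fs := hTfin.mem_toFinset.mpr ⟨y, hyT, rfl⟩
      have hmem : y ∈ cylA Adj (y.1 0) := rfl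
      calc ofR f y ≤ ENNReal.ofReal M * cylInd Adj (y.1 0) y := by
            rw [cylInd, Set.indicator_of_mem hmem]
            show ENNReal.ofReal (f y) ≤ ENNReal.ofReal M * 1
            rw [mul_one]
            exact ENNReal.ofReal_le_ofReal (hMy y)
        _ ≤ _ := Finset.single_le_sum (f := fun b => ENNReal.ofReal M * cylInd Adj b y) (fun b _ => zero_le) hbF
  have hsum2 : Green Adj φ lam (fun y => ∑ b ∈ Fs, ENNReal.ofReal M * cylInd Adj b y) x
      = ∑ b ∈ Fs, ENNReal.ofReal M * Green Adj φ lam (cylInd Adj b) x := by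
    rw [GFE.green_finset_sum lam Fs (fun b y => ENNReal.ofReal M * cylInd Adj b y) x]
    exact Finset.sum_congr rfl fun b _ => GFE.green_smul lam _ _ x
  refine ne_top_of_le_ne_top ?_ (GFE.green_mono hdom x)
  rw [hsum2]
  exact (ENNReal.sum_lt_top.mpr fun b _ =>
    (ENNReal.mul_ne_top ENNReal.ofReal_ne_top (hball b x)).lt_top).ne
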